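/- If G is a connected graph of order n and maximum degree Δ ≥ 3 that is not the complete graph K_{Δ+1}, then Z(G) ≤ (Δ−1)·n/Δ. -/
import Mathlib


namespace SimpleGraph

variable {V : Type*}

/-- `G.ZeroForces Z v` : vertex `v` is eventually colored when starting from `Z`
and iteratively adding any vertex that is the unique uncolored neighbor of a colored vertex. -/
inductive ZeroForces (G : SimpleGraph V) (Z : Set V) : V → Prop
  | base {v : V} : v ∈ Z → ZeroForces G Z v
  | force {v u : V} : ZeroForces G Z v → G.Adj v u →
      (∀ w, G.Adj v w → w ≠ u → ZeroForces G Z w) → ZeroForces G Z u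

/-- The forcing closure `F(Z)`. -/
def zfClosure (G : SimpleGraph V) (Z : Set V) : Set V := {v | G.ZeroForces Z v}

/-- `Z` is a zero forcing set of `G`. -/
def IsZeroForcingSet (G : SimpleGraph V) (Z : Set V) : Prop := ∀ v, G.ZeroForces Z v

/-- The zero forcing number `Z(G)`. -/
noncomputable def zeroForcingNumber (G : SimpleGraph V) [Fintype V] : ℕ :=
  sInf {k | ∃ Z : Finset V, Z.card = k ∧ G.IsZeroForcingSet ↑Z}

end SimpleGraph

open SimpleGraph Finset

lemma zf_trans {V : Type*} {G : SimpleGraph V} {Z Z' : Set V}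
    (h : ∀ z ∈ Z', G.ZeroForces Z z) {v : V} (hv : G.ZeroForces Z' v) :
    G.ZeroForces Z v := by
  induction hv with
  | base hz => exact h _ hz
  | force h1 hadj hall ih1 ih2 => exact .force ih1 hadj (fun w hw hne => ih2 w hw hne)

lemma cross_edge {V : Type*} {G : SimpleGraph V} {P : V → Prop} :
    ∀ {x y : V} (_ : G.Walk x y), P x → ¬ P y →
    ∃ w u, P w ∧ ¬ P u ∧ G.Adj w u := by
  intro x y p
  induction p with
  | nil => intro h h'; exact absurd h h'
  | @cons a b c h p ih =>
    intro hx hy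
    by_cases hm : P b
    · exact ih hm hy
    · exact ⟨_, _, hx, hm, h⟩

lemma walk_triple {V : Type*} {G : SimpleGraph V} :
    ∀ {x y : V} (_ : G.Walk x y), x ≠ y → ¬ G.Adj x y →
    ∃ a b c, G.Adj a b ∧ G.Adj b c ∧ a ≠ c ∧ ¬ G.Adj a c := by
  intro x y p
  induction p with
  | nil => intro h _; exact absurd rfl h
  | @cons a b c h p ih =>
    intro hxy hnadj
    by_cases hmy : G.Adj b c
    · exact ⟨a, b, c, h, hmy, hxy, hnadj⟩
    · rcases eq_or_ne b c with hbc | hbc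
      · subst hbc; exact absurd h hnadj
      · exact ih hbc hmy

lemma greedy {V : Type*} [Fintype V] [DecidableEq V] (G : SimpleGraph V) [DecidableRel G.Adj]
    (hconn : G.Connected) (f : ℕ) (hdeg : ∀ v, G.degree v ≤ f + 2) :
    ∀ (m : ℕ) (C : Finset V), (Cᶜ).card = m → C.Nonempty →
      (∀ w ∈ C, ∃ w' ∈ C, G.Adj w w') →
      ∃ B : Finset V, Disjoint B C ∧ (f + 1) * B.card ≤ f * m ∧
        G.IsZeroForcingSet ↑(C ∪ B) := by
  intro m
  induction m using Nat.strong_induction_on with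
  | _ m ih =>
    intro C hcard hCne hinv
    rcases Nat.eq_zero_or_pos m with hm0 | hmpos
    · subst hm0
      have hC : C = Finset.univ := by
        rwa [Finset.card_eq_zero, Finset.compl_eq_empty_iff] at hcard
      refine ⟨∅, Finset.disjoint_empty_left _, by simp, fun v => ?_⟩
      exact .base (by simp [hC])
    · -- there is a crossing edge
      have hne : (Cᶜ : Finset V).Nonempty := Finset.card_pos.mp (by omega)
      obtain ⟨x, hx⟩ := hCne
      obtain ⟨y, hy⟩ := hne
      have hy' : y ∉ C := by simpa using hy
      obtain ⟨w, u, hwC, huC, hadj⟩ :=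
        cross_edge (P := fun v => v ∈ C) ((hconn.preconnected x y).some) hx hy'
      -- set of uncolored neighbors of w
      set Nu : Finset V := G.neighborFinset w \ C with hNu
      have huNu : u ∈ Nu := by simp [hNu, huC, hadj]
      have hNusub : Nu ⊆ Cᶜ := fun v hv => by
        simp only [hNu, Finset.mem_sdiff] at hv
        simpa using hv.2
      have ht1 : 1 ≤ Nu.card := Finset.card_pos.mpr ⟨u, huNu⟩
      have htm : Nu.card ≤ m := hcard ▸ Finset.card_le_card hNusub
      -- Nu.card ≤ f + 1
      obtain ⟨w', hw'C, hw'adj⟩ := hinv w hwC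
      have hw'mem : w' ∈ G.neighborFinset w := by simpa using hw'adj
      have htf : Nu.card ≤ f + 1 := by
        have hsub : Nu ⊆ (G.neighborFinset w).erase w' := by
          intro v hv
          simp only [hNu, Finset.mem_sdiff] at hv
          exact Finset.mem_erase.mpr ⟨fun hvw' => hv.2 (hvw' ▸ hw'C), hv.1⟩
        have := Finset.card_le_card hsub
        rw [Finset.card_erase_of_mem hw'mem, card_neighborFinset_eq_degree] at this
        have := hdeg w
        omega
      set C' : Finset V := C ∪ Nu with hC'
      have hcard' : (C'ᶜ).card = m - Nu.card := by
        have hcomp : C'ᶜ = Cᶜ \ Nu := by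
          ext t
          simp only [hC', Finset.compl_union, Finset.mem_inter, Finset.mem_sdiff,
            Finset.mem_compl]
        rw [hcomp, Finset.card_sdiff_of_subset hNusub, hcard]
      have hinv' : ∀ v ∈ C', ∃ v' ∈ C', G.Adj v v' := by
        intro v hv
        rcases Finset.mem_union.mp hv with hv | hv
        · obtain ⟨v', h1, h2⟩ := hinv v hv
          exact ⟨v', Finset.mem_union_left _ h1, h2⟩
        · refine ⟨w, Finset.mem_union_left _ hwC, ?_⟩
          have : v ∈ G.neighborFinset w := (Finset.mem_sdiff.mp (hNu ▸ hv)).1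
          exact (G.mem_neighborFinset w v).mp this |>.symm
      obtain ⟨B', hB'disj, hB'card, hB'zf⟩ :=
        ih (m - Nu.card) (by omega) C' hcard' ⟨x, Finset.mem_union_left _ hx⟩ hinv'
      refine ⟨B' ∪ Nu.erase u, ?_, ?_, ?_⟩
      · refine Finset.disjoint_union_left.mpr ⟨?_, ?_⟩
        · exact hB'disj.mono_right (Finset.subset_union_left)
        · exact Finset.disjoint_left.mpr fun v hv hvC =>
            (Finset.mem_sdiff.mp (hNu ▸ (Finset.erase_subset _ _ hv))).2 hvC
      · have hcardB : (B' ∪ Nu.erase u).card ≤ B'.card + (Nu.card - 1) := by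
          have := Finset.card_union_le B' (Nu.erase u)
          rw [Finset.card_erase_of_mem huNu] at this
          exact this
        obtain ⟨s, hs⟩ : ∃ s, Nu.card = s + 1 := ⟨Nu.card - 1, by omega⟩
        obtain ⟨m', hm'⟩ : ∃ m', m = m' + s + 1 := ⟨m - (s+1), by omega⟩
        rw [hs] at hB'card htf hcardB
        rw [hm'] at hB'card ⊢
        simp only [Nat.add_sub_cancel] at hB'card hcardB
        have h1 : (f+1) * (B' ∪ Nu.erase u).card ≤ (f+1) * (B'.card + s) :=
          Nat.mul_le_mul_left _ hcardB
        have h2 : m' + s + 1 - (s + 1) = m' := by omega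
        rw [h2] at hB'card
        nlinarith [hB'card, htf]
      · -- zero forcing
        intro v
        refine zf_trans (Z := ↑(C ∪ (B' ∪ Nu.erase u))) ?_ (hB'zf v)
        intro z hz
        rcases Finset.mem_union.mp (by simpa using hz) with hz | hz
        · rcases Finset.mem_union.mp hz with hz | hz
          · exact .base (by simp [hz])
          · rcases eq_or_ne z u with hzu | hzu
            · rw [hzu]
              refine .force (v := w) (.base (by simp [hwC])) hadj ?_
              intro t hadjt htu
              by_cases htC : t ∈ C
              · exact .base (by simp [htC])
              · have htNu : t ∈ Nu := by simp [hNu, htC, hadjt]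
                exact .base (by simp [htNu, htu])
            · exact .base (by simp [hz, hzu])
        · exact .base (by simp [hz])

theorem stmt10 {V : Type*} [Fintype V] (G : SimpleGraph V) [DecidableRel G.Adj] (Δ : ℕ)
    (hΔ : G.maxDegree = Δ) (h3 : 3 ≤ Δ) (hconn : G.Connected)
    (hK : ¬ (Fintype.card V = Δ + 1 ∧ G = ⊤)) :
    (G.zeroForcingNumber : ℝ) ≤ ((Δ : ℝ) - 1) * (Fintype.card V : ℝ) / (Δ : ℝ) := by
  classical
  have hV : Nonempty V := hconn.nonempty
  set n := Fintype.card V with hn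
  obtain ⟨v, hv⟩ := G.exists_maximal_degree_vertex
  have hvdeg : G.degree v = Δ := by rw [← hv, hΔ]
  have hdeg : ∀ w, G.degree w ≤ Δ := fun w => hΔ ▸ G.degree_le_maxDegree w
  have hnΔ : Δ < n := hvdeg ▸ G.degree_lt_card_verts v
  -- key : nat inequality
  have key : G.zeroForcingNumber * Δ ≤ (Δ - 1) * n := by
    by_cases hcase : n ≤ 2 * Δ
    · -- non-complete : forcing set of size n - 2
      have hnc : ∃ x y : V, x ≠ y ∧ ¬ G.Adj x y := by
        by_contra h
        push_neg at h
        have hGtop : G = ⊤ := by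
          ext x y
          simp only [top_adj]
          exact ⟨fun hxy => hxy.ne, fun hxy => h x y hxy⟩
        have hdv : G.degree v = n - 1 := by
          rw [← card_neighborFinset_eq_degree]
          have : G.neighborFinset v = Finset.univ.erase v := by
            ext t
            simp only [mem_neighborFinset, Finset.mem_erase, Finset.mem_univ, and_true]
            exact ⟨fun h' => Ne.symm (G.ne_of_adj h'), fun h' => h v t (Ne.symm h')⟩
          rw [this, Finset.card_erase_of_mem (Finset.mem_univ v), Finset.card_univ]
        exact hK ⟨by omega, hGtop⟩
      obtain ⟨x, y, hxy, hnadj⟩ := hnc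
      obtain ⟨a, b, c, hab, hbc, hac, hnac⟩ :=
        walk_triple ((hconn.preconnected x y).some) hxy hnadj
      set Z : Finset V := Finset.univ \ {a, b} with hZ
      have hZcard : Z.card = n - 2 := by
        rw [hZ, Finset.card_sdiff_of_subset (Finset.subset_univ _), Finset.card_univ]
        congr 1
        rw [Finset.card_insert_of_notMem (by simp [hab.ne]), Finset.card_singleton]
      have hmemZ : ∀ t : V, t ≠ a → t ≠ b → (t : V) ∈ (↑Z : Set V) := by
        intro t h1 h2
        simp [hZ, h1, h2]
      have hcZ : G.ZeroForces ↑Z c := .base (hmemZ c (Ne.symm hac) hbc.ne')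
      have hbZ : G.ZeroForces ↑Z b := by
        refine .force hcZ hbc.symm ?_
        intro t hadjt htb
        refine .base (hmemZ t ?_ htb)
        rintro rfl
        exact hnac hadjt.symm
      have haZ : G.ZeroForces ↑Z a := by
        refine .force hbZ hab.symm ?_
        intro t hadjt hta
        rcases eq_or_ne t b with rfl | htb
        · exact absurd rfl hadjt.ne'
        · exact .base (hmemZ t hta htb)
      have hZF : G.IsZeroForcingSet ↑Z := by
        intro t
        rcases eq_or_ne t a with rfl | h1
        · exact haZ
        rcases eq_or_ne t b with rfl | h2
        · exact hbZ
        exact .base (hmemZ t h1 h2)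
      have hle : G.zeroForcingNumber ≤ n - 2 :=
        hZcard ▸ Nat.sInf_le ⟨Z, rfl, hZF⟩
      obtain ⟨d, hd⟩ : ∃ d, Δ = d + 3 := ⟨Δ - 3, by omega⟩
      obtain ⟨m2, hm2⟩ : ∃ m2, n = m2 + 2 := ⟨n - 2, by omega⟩
      have hzm : G.zeroForcingNumber ≤ m2 := by omega
      have hsub : Δ - 1 = d + 2 := by omega
      rw [hm2, hsub, hd]
      have h2d : m2 ≤ 2 * d + 4 := by omega
      nlinarith [Nat.mul_le_mul_right (d + 3) hzm]
    · -- the greedy bound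
      obtain ⟨f, hf⟩ : ∃ f, Δ = f + 2 := ⟨Δ - 2, by omega⟩
      have hdeg' : ∀ w, G.degree w ≤ f + 2 := fun w => hf ▸ hdeg w
      obtain ⟨u, hu⟩ : ∃ u, G.Adj v u := by
        have : 0 < G.degree v := by omega
        obtain ⟨u, hu⟩ := Finset.card_pos.mp (card_neighborFinset_eq_degree G v ▸ this)
        exact ⟨u, (G.mem_neighborFinset v u).mp hu⟩
      set C : Finset V := {v, u} with hC
      have hCcard : C.card = 2 := by
        rw [hC, Finset.card_insert_of_notMem (by simp [hu.ne]), Finset.card_singleton]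
      have hCinv : ∀ w ∈ C, ∃ w' ∈ C, G.Adj w w' := by
        intro w hw
        rcases Finset.mem_insert.mp hw with rfl | hw
        · exact ⟨u, by simp [hC], hu⟩
        · rw [Finset.mem_singleton] at hw
          subst hw
          exact ⟨v, by simp [hC], hu.symm⟩
      have hCcompl : (Cᶜ).card = n - 2 := by
        rw [Finset.card_compl, hCcard]
      obtain ⟨B, hBdisj, hBcard, hBzf⟩ :=
        greedy G hconn f hdeg' (n - 2) C hCcompl ⟨v, by simp [hC]⟩ hCinv
      have hle : G.zeroForcingNumber ≤ 2 + B.card := by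
        refine le_trans (Nat.sInf_le ⟨C ∪ B, rfl, hBzf⟩) ?_
        have := Finset.card_union_le C B
        omega
      -- arithmetic
      obtain ⟨m2, hm2⟩ : ∃ m2, n = m2 + 2 := ⟨n - 2, by omega⟩
      rw [hm2] at hBcard ⊢
      simp only [Nat.add_sub_cancel] at hBcard
      have h2d : 2 * Δ ≤ m2 + 2 := by omega
      have hmul : (f + 1) * (G.zeroForcingNumber * Δ) ≤ (f + 1) * ((Δ - 1) * (m2 + 2)) := by
        rw [hf]
        have hz : G.zeroForcingNumber ≤ 2 + B.card := hle
        have : f + 2 - 1 = f + 1 := by omega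
        rw [this]
        nlinarith [hBcard, hz, h2d, Nat.mul_le_mul_left (f + 1) (Nat.mul_le_mul_right (f + 2) hz),
          Nat.mul_le_mul_left (f + 2) hBcard]
      exact Nat.le_of_mul_le_mul_left hmul (by omega)
  -- cast to ℝ
  have hΔpos : (0 : ℝ) < (Δ : ℝ) := by exact_mod_cast (by omega : 0 < Δ)
  rw [le_div_iff₀ hΔpos]
  have hcast : ((G.zeroForcingNumber * Δ : ℕ) : ℝ) ≤ (((Δ - 1) * n : ℕ) : ℝ) :=
    Nat.cast_le.mpr key
  push_cast [Nat.cast_sub (by omega : 1 ≤ Δ)] at hcast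
  linarith
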